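/- Let q be a prime power and let integers satisfy 0 = u_0 < u_1 < u_2 < ... < u_s < u_{s+1} = k and 1 ≤ s ≤ t. Set n = t(q^k - 1)/(q - 1) - Σ_{i=1}^{s} (q^{u_i} - 1)/(q - 1) and d = t·q^{k-1} - Σ_{i=1}^{s} q^{u_i - 1}. Then there exists an [n,k]_q linear code C with minimum Hamming distance d such that d + Σ_{i=1}^{k-1} ⌈d/q^i⌉ = n, i.e., C is a Griesmer code. -/
import Mathlib


open Finset

/-- The Hamming weight of a vector. -/
noncomputable def hwt {F : Type} [Zero F] {n : ℕ} (c : Fin n → F) : ℕ :=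
  Nat.card {i : Fin n // c i ≠ 0}

/-- The subcode support weight of a subspace of `F^n`. -/
noncomputable def suppWt {F : Type} [Field F] {n : ℕ} (X : Submodule F (Fin n → F)) : ℕ :=
  Nat.card {i : Fin n // ∃ x ∈ X, x i ≠ 0}

/-- The minimum Hamming distance of a linear code. -/
noncomputable def minDist {F : Type} [Field F] {n : ℕ} (C : Submodule F (Fin n → F)) : ℕ :=
  sInf {w | ∃ c ∈ C, c ≠ 0 ∧ hwt c = w}

/-- The `r`-th generalized Hamming weight of a linear code. -/
noncomputable def ghw {F : Type} [Field F] {n : ℕ} (C : Submodule F (Fin n → F)) (r : ℕ) : ℕ :=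
  sInf {w | ∃ U : Submodule F (Fin n → F), U ≤ C ∧ Module.finrank F ↥U = r ∧ suppWt U = w}

/-- `sswd C r j` = the number of `r`-dimensional subspaces `U` of `C` with support weight `j`. -/
noncomputable def sswd {F : Type} [Field F] {n : ℕ} (C : Submodule F (Fin n → F)) (r j : ℕ) : ℕ :=
  Nat.card {U : Submodule F (Fin n → F) // U ≤ C ∧ Module.finrank F ↥U = r ∧ suppWt U = j}

/-- `wdist C j` = the number of codewords of `C` of Hamming weight `j`. -/
noncomputable def wdist {F : Type} [Field F] {n : ℕ} (C : Submodule F (Fin n → F)) (j : ℕ) : ℕ :=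
  Nat.card {c : Fin n → F // c ∈ C ∧ hwt c = j}

/-- The q-ary Gaussian binomial coefficient `[k choose r]_q`. -/
def gbinom (q k r : ℕ) : ℕ :=
  (∏ i ∈ Finset.range r, (q ^ k - q ^ i)) / (∏ i ∈ Finset.range r, (q ^ r - q ^ i))

/-- Ceiling division of naturals: `cdiv a b = ⌈a/b⌉`. -/
def cdiv (a b : ℕ) : ℕ := (a + b - 1) / b

set_option linter.unusedSectionVars false
set_option linter.unusedVariables false

open Finset
open scoped LinearAlgebra.Projectivization

namespace SSaux

/-- geometric partial sum -/
def G (q m : ℕ) : ℕ := ∑ i ∈ range m, q ^ i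

lemma G_mul {q : ℕ} (hq : 1 ≤ q) (m : ℕ) : (q - 1) * G q m = q ^ m - 1 := by
  have h : ((q : ℤ) - 1) * (∑ i ∈ range m, (q : ℤ) ^ i) = (q : ℤ) ^ m - 1 := by
    rw [mul_comm]; exact geom_sum_mul _ _
  have h1 : 1 ≤ q ^ m := Nat.one_le_pow _ _ hq
  have : (((q - 1) * G q m : ℕ) : ℤ) = ((q ^ m - 1 : ℕ) : ℤ) := by
    push_cast [G, hq, h1]
    simpa using h
  exact_mod_cast this

lemma G_div {q : ℕ} (hq : 2 ≤ q) (m : ℕ) : (q ^ m - 1) / (q - 1) = G q m :=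
  Nat.div_eq_of_eq_mul_left (by omega) (by rw [mul_comm]; exact (G_mul (by omega) m).symm)

lemma G_lt {q : ℕ} (hq : 2 ≤ q) (m : ℕ) : G q m < q ^ m := by
  have h := G_mul (by omega : 1 ≤ q) m
  have h1 : 1 ≤ q ^ m := Nat.one_le_pow _ _ (by omega)
  have h2 : G q m ≤ (q - 1) * G q m := Nat.le_mul_of_pos_left _ (by omega)
  omega

lemma G_mono {q : ℕ} {a b : ℕ} (h : a ≤ b) : G q a ≤ G q b :=
  Finset.sum_le_sum_of_subset (Finset.range_subset_range.2 h)

lemma sum_pow_lt {q : ℕ} (hq : 2 ≤ q) (i : ℕ) (A : Finset ℕ) (hA : ∀ e ∈ A, e < i) :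
    ∑ e ∈ A, q ^ e < q ^ i :=
  lt_of_le_of_lt
    (Finset.sum_le_sum_of_subset (fun e he => Finset.mem_range.mpr (hA e he)))
    (G_lt hq i)

/-- ceiling division formula -/
lemma cdiv_formula (Q M L D : ℕ) (hQ : 0 < Q) (hL : L < Q) (hM : 0 < M)
    (hD : D + L = Q * M) : cdiv D Q = M := by
  unfold cdiv
  have h1 : D + Q - 1 = (Q - 1 - L) + Q * M := by omega
  rw [h1, Nat.add_mul_div_left _ _ hQ, Nat.div_eq_of_lt (by omega)]; omega

end SSaux


namespace SSaux2

variable {F : Type} [Field F] [Fintype F]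

/-- dot product -/
def dp {k : ℕ} (v a : Fin k → F) : F := ∑ i, v i * a i

lemma dp_zero {k : ℕ} (v : Fin k → F) : dp v (0 : Fin k → F) = 0 := by simp [dp]

lemma dp_zero_left {k : ℕ} (a : Fin k → F) : dp (0 : Fin k → F) a = 0 := by simp [dp]

lemma dp_smul_left {k : ℕ} (c : F) (v a : Fin k → F) : dp (c • v) a = c * dp v a := by
  simp [dp, Finset.mul_sum, mul_assoc]

/-- the coordinate subspace -/
def Vsub (k m : ℕ) : Submodule F (Fin k → F) where
  carrier := {v | ∀ i : Fin k, m ≤ (i : ℕ) → v i = 0}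
  add_mem' := fun ha hb i hi => by simp [ha i hi, hb i hi]
  zero_mem' := fun i _ => rfl
  smul_mem' := fun c a ha i hi => by simp [ha i hi]

lemma mem_Vsub {k m : ℕ} (v : Fin k → F) : v ∈ (Vsub k m : Submodule F (Fin k → F)) ↔
    ∀ i : Fin k, m ≤ (i : ℕ) → v i = 0 := Iff.rfl

lemma mem_Vsub_top {k : ℕ} (v : Fin k → F) : v ∈ (Vsub k k : Submodule F (Fin k → F)) := by
  intro i hi; exact absurd hi (by omega)

/-- card of Vsub -/
lemma card_Vsub {k m : ℕ} (hm : m ≤ k) :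
    Nat.card (Vsub (F := F) k m) = Fintype.card F ^ m := by
  have e : (Vsub (F := F) k m) ≃ (Fin m → F) := by
    refine
      { toFun := fun v i => v.1 ⟨i, lt_of_lt_of_le i.2 hm⟩
        invFun := fun w => ⟨fun i => if h : (i : ℕ) < m then w ⟨i, h⟩ else 0, ?_⟩
        left_inv := ?_
        right_inv := ?_ }
    · intro i hi; simp only []; rw [dif_neg]; omega
    · intro v
      apply Subtype.ext
      funext i
      by_cases h : (i : ℕ) < m
      · simp [h]
      · simp only [dif_neg h]
        exact (v.2 i (by omega)).symm
    · intro w; funext i; simp [i.2]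
  rw [Nat.card_congr e]
  simp [Nat.card_eq_fintype_card]

/-- splitting card by a predicate -/
lemma card_and_not {α : Type} [Finite α] (p r : α → Prop) :
    Nat.card {x : α // p x ∧ r x} + Nat.card {x : α // p x ∧ ¬ r x} = Nat.card {x // p x} := by
  classical
  rw [← Nat.card_sum]
  apply Nat.card_congr
  refine
    { toFun := Sum.elim (fun x => ⟨x.1, x.2.1⟩) (fun x => ⟨x.1, x.2.1⟩)
      invFun := fun x => if h : r x.1 then .inl ⟨x.1, x.2, h⟩ else .inr ⟨x.1, x.2, h⟩
      left_inv := ?_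
      right_inv := ?_ }
  · rintro (⟨x, hp, hr⟩ | ⟨x, hp, hr⟩) <;> simp [hr]
  · rintro ⟨x, hp⟩
    by_cases h : r x <;> simp [h]

lemma Natcard_sigma {ι : Type} [Fintype ι] (A : ι → Type) [∀ i, Finite (A i)] :
    Nat.card ((i : ι) × A i) = ∑ i, Nat.card (A i) := by
  classical
  letI : ∀ i, Fintype (A i) := fun i => Fintype.ofFinite _
  simp [Nat.card_eq_fintype_card]

lemma card_ne_zero_sub {M : Type} [Finite M] [Zero M] :
    Nat.card {x : M // x ≠ 0} = Nat.card M - 1 := by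
  classical
  letI := Fintype.ofFinite M
  simp [Nat.card_eq_fintype_card, Fintype.card_subtype_compl, Fintype.card_subtype_eq]

end SSaux2


namespace SSaux3
variable {F : Type} [Field F] [Fintype F]

/-- all nonempty fibers of a linear functional have the same size -/
lemma card_fiber_eq {M : Type} [AddCommGroup M] [Module F M] [Finite M]
    (ψ : M →ₗ[F] F) (y : F) (hy : ∃ v, ψ v = y) :
    Nat.card {v : M // ψ v = y} = Nat.card {v : M // ψ v = 0} := by
  obtain ⟨v₀, hv₀⟩ := hy
  apply Nat.card_congr
  refine
    { toFun := fun v => ⟨v.1 - v₀, by simp [v.2, hv₀]⟩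
      invFun := fun w => ⟨w.1 + v₀, by simp [w.2, hv₀]⟩
      left_inv := fun v => by ext; simp
      right_inv := fun w => by ext; simp }

lemma card_eq_q_mul {M : Type} [AddCommGroup M] [Module F M] [Finite M]
    (ψ : M →ₗ[F] F) (hsurj : ∀ y : F, ∃ v, ψ v = y) :
    Nat.card M = Fintype.card F * Nat.card {v : M // ψ v = 0} := by
  have e : M ≃ (y : F) × {v : M // ψ v = y} :=
    { toFun := fun v => ⟨ψ v, ⟨v, rfl⟩⟩
      invFun := fun x => x.2.1
      left_inv := fun v => rfl
      right_inv := fun x => by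
        obtain ⟨y, ⟨v, hv⟩⟩ := x
        subst hv; rfl }
  rw [Nat.card_congr e, SSaux2.Natcard_sigma]
  rw [Finset.sum_congr rfl (fun y _ => card_fiber_eq ψ y (hsurj y))]
  simp [mul_comm]

lemma card_ne_eq_mul {M : Type} [AddCommGroup M] [Module F M] [Finite M]
    (ψ : M →ₗ[F] F) (hsurj : ∀ y : F, ∃ v, ψ v = y) :
    Nat.card {v : M // ψ v ≠ 0} = (Fintype.card F - 1) * Nat.card {v : M // ψ v = 0} := by
  have e : {v : M // ψ v ≠ 0} ≃ (y : {y : F // y ≠ 0}) × {v : M // ψ v = y.1} :=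
    { toFun := fun v => ⟨⟨ψ v.1, v.2⟩, ⟨v.1, rfl⟩⟩
      invFun := fun x => ⟨x.2.1, by rw [x.2.2]; exact x.1.2⟩
      left_inv := fun v => rfl
      right_inv := fun x => by
        obtain ⟨⟨y, hy⟩, ⟨v, hv⟩⟩ := x
        have hv' : ψ v = y := hv
        subst hv'
        rfl }
  classical
  rw [Nat.card_congr e, SSaux2.Natcard_sigma]
  rw [Finset.sum_congr rfl (fun y _ => card_fiber_eq ψ y.1 (hsurj y.1))]
  rw [Finset.sum_const, smul_eq_mul]
  congr 1
  rw [Finset.card_univ, ← Nat.card_eq_fintype_card, SSaux2.card_ne_zero_sub,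
    Nat.card_eq_fintype_card]

/-- main vector-level count -/
lemma card_dp_count {k m : ℕ} (hm1 : 1 ≤ m) (hmk : m ≤ k) (a : Fin k → F)
    (hx : ∃ v ∈ (SSaux2.Vsub k m : Submodule F (Fin k → F)), SSaux2.dp v a ≠ 0) :
    Nat.card {v : Fin k → F // v ∈ (SSaux2.Vsub k m : Submodule F (Fin k → F)) ∧ SSaux2.dp v a ≠ 0}
      = Fintype.card F ^ m - Fintype.card F ^ (m - 1) := by
  classical
  set q := Fintype.card F with hqdef
  set W : Submodule F (Fin k → F) := SSaux2.Vsub k m with hW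
  have hq2 : 2 ≤ q := Fintype.one_lt_card
  -- the functional on W
  set ψ : W →ₗ[F] F :=
    { toFun := fun v => SSaux2.dp v.1 a
      map_add' := by
        intro v w
        simp [SSaux2.dp, add_mul, Finset.sum_add_distrib]
      map_smul' := by
        intro c v
        simp [SSaux2.dp, Finset.mul_sum, mul_assoc] } with hψ
  obtain ⟨v₀, hv₀W, hv₀⟩ := hx
  have hsurj : ∀ y : F, ∃ v : W, ψ v = y := by
    intro y
    refine ⟨(y * (SSaux2.dp v₀ a)⁻¹) • ⟨v₀, hv₀W⟩, ?_⟩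
    have : ψ ((y * (SSaux2.dp v₀ a)⁻¹) • (⟨v₀, hv₀W⟩ : W))
        = (y * (SSaux2.dp v₀ a)⁻¹) * ψ ⟨v₀, hv₀W⟩ := by
      rw [map_smul]; simp
    rw [this]
    show (y * (SSaux2.dp v₀ a)⁻¹) * SSaux2.dp v₀ a = y
    field_simp
  -- counts
  have hK : q * Nat.card {v : W // ψ v = 0} = q ^ m := by
    rw [← card_eq_q_mul ψ hsurj, SSaux2.card_Vsub hmk]
  have hKval : Nat.card {v : W // ψ v = 0} = q ^ (m - 1) := by
    have : q * Nat.card {v : W // ψ v = 0} = q * q ^ (m - 1) := by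
      rw [hK, ← pow_succ']
      congr 1
      omega
    exact Nat.eq_of_mul_eq_mul_left (by omega) this
  have hne : Nat.card {v : W // ψ v ≠ 0} = (q - 1) * q ^ (m - 1) := by
    rw [card_ne_eq_mul ψ hsurj, hKval]
  have e2 : {v : Fin k → F // v ∈ W ∧ SSaux2.dp v a ≠ 0} ≃ {v : W // ψ v ≠ 0} :=
    ((Equiv.subtypeSubtypeEquivSubtypeInter (· ∈ W) (fun v => SSaux2.dp v a ≠ 0))).symm
  rw [Nat.card_congr e2, hne]
  have h1 : 1 ≤ q ^ (m - 1) := Nat.one_le_pow _ _ (by omega)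
  have h2 : q ^ m = q * q ^ (m - 1) := by rw [← pow_succ']; congr 1; omega
  rw [h2]
  rw [Nat.sub_mul, one_mul]

lemma card_dp_zero {k m : ℕ} (a : Fin k → F)
    (hx : ¬ ∃ v ∈ (SSaux2.Vsub k m : Submodule F (Fin k → F)), SSaux2.dp v a ≠ 0) :
    Nat.card {v : Fin k → F // v ∈ (SSaux2.Vsub k m : Submodule F (Fin k → F)) ∧ SSaux2.dp v a ≠ 0}
      = 0 := by
  push_neg at hx
  have : IsEmpty {v : Fin k → F // v ∈ (SSaux2.Vsub k m : Submodule F (Fin k → F)) ∧ SSaux2.dp v a ≠ 0} := by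
    constructor
    rintro ⟨v, hv, hdp⟩
    exact hdp (hx v hv)
  exact Nat.card_of_isEmpty

end SSaux3

namespace SSaux4
variable {F : Type} [Field F] [Fintype F] {k : ℕ}

instance finP : Finite (ℙ F (Fin k → F)) :=
  Finite.of_surjective (fun v : {v : Fin k → F // v ≠ 0} => Projectivization.mk F v.1 v.2)
    (fun P => ⟨⟨P.rep, P.rep_nonzero⟩, P.mk_rep⟩)

lemma proj_count (Q : (Fin k → F) → Prop) (hQ0 : ∀ v, Q v → v ≠ 0)
    (hQs : ∀ (c : Fˣ) (v : Fin k → F), Q v → Q ((c : F) • v)) :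
    (Fintype.card F - 1) * Nat.card {P : ℙ F (Fin k → F) // Q P.rep}
      = Nat.card {v : Fin k → F // Q v} := by
  classical
  have hf : Function.Bijective
      (fun x : {P : ℙ F (Fin k → F) // Q P.rep} × Fˣ =>
        (⟨(x.2 : F) • x.1.1.rep, hQs x.2 _ x.1.2⟩ : {v : Fin k → F // Q v})) := by
    constructor
    · rintro ⟨⟨P, hP⟩, c⟩ ⟨⟨P', hP'⟩, c'⟩ h
      have h' : (c : F) • P.rep = (c' : F) • P'.rep := congrArg Subtype.val h
      have hcP : Projectivization.mk F ((c : F) • P.rep)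
          (smul_ne_zero c.ne_zero P.rep_nonzero) = P := by
        conv_rhs => rw [← P.mk_rep]
        rw [Projectivization.mk_eq_mk_iff]
        exact ⟨c, rfl⟩
      have hcP' : Projectivization.mk F ((c' : F) • P'.rep)
          (smul_ne_zero c'.ne_zero P'.rep_nonzero) = P' := by
        conv_rhs => rw [← P'.mk_rep]
        rw [Projectivization.mk_eq_mk_iff]
        exact ⟨c', rfl⟩
      have hPP' : P = P' := by
        rw [← hcP, ← hcP']
        congr 1
      subst hPP'
      have hcc : (c : F) = (c' : F) := by
        have hrep := P.rep_nonzero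
        have hz : ((c : F) - (c' : F)) • P.rep = 0 := by
          rw [sub_smul, h', sub_self]
        rcases smul_eq_zero.mp hz with h0 | h0
        · exact sub_eq_zero.mp h0
        · exact absurd h0 hrep
      exact Prod.ext (Subtype.ext rfl) (Units.ext hcc)
    · rintro ⟨v, hv⟩
      have hv0 : v ≠ 0 := hQ0 v hv
      set P := Projectivization.mk F v hv0 with hPdef
      have : Projectivization.mk F P.rep P.rep_nonzero = Projectivization.mk F v hv0 :=
        by rw [P.mk_rep]
      rw [Projectivization.mk_eq_mk_iff] at this
      obtain ⟨a, ha⟩ := this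
      refine ⟨⟨⟨P, ?_⟩, a⁻¹⟩, ?_⟩
      · rw [← ha]; exact hQs a v hv
      · apply Subtype.ext
        show ((a⁻¹ : Fˣ) : F) • P.rep = v
        rw [← ha]
        simp [Units.smul_def, smul_smul]
  rw [← Nat.card_congr (Equiv.ofBijective _ hf), Nat.card_prod, mul_comm]
  congr 1
  rw [Nat.card_eq_fintype_card, Fintype.card_units]

end SSaux4

namespace SSaux5
variable {F : Type} [Field F] [Fintype F] {k : ℕ}

lemma cardP_V {m : ℕ} (hm : m ≤ k) :
    Nat.card {P : ℙ F (Fin k → F) // P.rep ∈ (SSaux2.Vsub k m : Submodule F (Fin k → F))}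
      = SSaux.G (Fintype.card F) m := by
  have hq2 : 2 ≤ Fintype.card F := Fintype.one_lt_card
  apply Nat.eq_of_mul_eq_mul_left (show 0 < Fintype.card F - 1 by omega)
  have e : {P : ℙ F (Fin k → F) // P.rep ∈ (SSaux2.Vsub k m : Submodule F (Fin k → F))}
      ≃ {P : ℙ F (Fin k → F) //
          P.rep ∈ (SSaux2.Vsub k m : Submodule F (Fin k → F)) ∧ P.rep ≠ 0} :=
    Equiv.subtypeEquivRight (fun P => ⟨fun h => ⟨h, P.rep_nonzero⟩, fun h => h.1⟩)
  rw [Nat.card_congr e]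
  rw [SSaux4.proj_count
    (fun v => v ∈ (SSaux2.Vsub k m : Submodule F (Fin k → F)) ∧ v ≠ 0)
    (fun v h => h.2)
    (fun c v h => ⟨Submodule.smul_mem _ _ h.1, smul_ne_zero c.ne_zero h.2⟩)]
  have e2 : {v : Fin k → F // v ∈ (SSaux2.Vsub k m : Submodule F (Fin k → F)) ∧ v ≠ 0}
      ≃ {x : (SSaux2.Vsub (F := F) k m) // x ≠ 0} := by
    refine (Equiv.subtypeSubtypeEquivSubtypeInter _ _).symm.trans
      (Equiv.subtypeEquivRight ?_)
    intro x
    simp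
  rw [Nat.card_congr e2, SSaux2.card_ne_zero_sub, SSaux2.card_Vsub hm,
    SSaux.G_mul (by omega : 1 ≤ Fintype.card F) m]

lemma cardP_top : Nat.card (ℙ F (Fin k → F)) = SSaux.G (Fintype.card F) k := by
  rw [← cardP_V (le_refl k)]
  exact (Nat.card_congr (Equiv.subtypeUnivEquiv (fun P => SSaux2.mem_Vsub_top _)).symm)

lemma cardP_V_dp {m : ℕ} (hm1 : 1 ≤ m) (hmk : m ≤ k) (a : Fin k → F)
    (hx : ∃ v ∈ (SSaux2.Vsub k m : Submodule F (Fin k → F)), SSaux2.dp v a ≠ 0) :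
    Nat.card {P : ℙ F (Fin k → F) //
        P.rep ∈ (SSaux2.Vsub k m : Submodule F (Fin k → F)) ∧ SSaux2.dp P.rep a ≠ 0}
      = Fintype.card F ^ (m - 1) := by
  have hq2 : 2 ≤ Fintype.card F := Fintype.one_lt_card
  apply Nat.eq_of_mul_eq_mul_left (show 0 < Fintype.card F - 1 by omega)
  rw [SSaux4.proj_count
    (fun v => v ∈ (SSaux2.Vsub k m : Submodule F (Fin k → F)) ∧ SSaux2.dp v a ≠ 0)
    (fun v h => fun h0 => h.2 (h0 ▸ SSaux2.dp_zero_left a))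
    (fun c v h => ⟨Submodule.smul_mem _ _ h.1, by
      rw [SSaux2.dp_smul_left]
      exact mul_ne_zero c.ne_zero h.2⟩)]
  rw [SSaux3.card_dp_count hm1 hmk a hx]
  have h1 : 1 ≤ Fintype.card F ^ (m - 1) := Nat.one_le_pow _ _ (by omega)
  have h2 : Fintype.card F ^ m = Fintype.card F * Fintype.card F ^ (m - 1) := by rw [← pow_succ']; congr 1; omega
  rw [h2, Nat.sub_mul, one_mul]

lemma cardP_V_dp_zero {m : ℕ} (a : Fin k → F)
    (hx : ¬ ∃ v ∈ (SSaux2.Vsub k m : Submodule F (Fin k → F)), SSaux2.dp v a ≠ 0) :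
    Nat.card {P : ℙ F (Fin k → F) //
        P.rep ∈ (SSaux2.Vsub k m : Submodule F (Fin k → F)) ∧ SSaux2.dp P.rep a ≠ 0}
      = 0 := by
  push_neg at hx
  have : IsEmpty {P : ℙ F (Fin k → F) //
      P.rep ∈ (SSaux2.Vsub k m : Submodule F (Fin k → F)) ∧ SSaux2.dp P.rep a ≠ 0} := by
    constructor
    rintro ⟨P, hP, hdp⟩
    exact hdp (hx P.rep hP)
  exact Nat.card_of_isEmpty

lemma cardP_dp_top (hk : 1 ≤ k) (a : Fin k → F) (ha : a ≠ 0) :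
    Nat.card {P : ℙ F (Fin k → F) // SSaux2.dp P.rep a ≠ 0} = Fintype.card F ^ (k - 1) := by
  have e : {P : ℙ F (Fin k → F) // SSaux2.dp P.rep a ≠ 0}
      ≃ {P : ℙ F (Fin k → F) //
          P.rep ∈ (SSaux2.Vsub k k : Submodule F (Fin k → F)) ∧ SSaux2.dp P.rep a ≠ 0} :=
    Equiv.subtypeEquivRight (fun P => ⟨fun h => ⟨SSaux2.mem_Vsub_top _, h⟩, fun h => h.2⟩)
  rw [Nat.card_congr e]
  apply cardP_V_dp hk (le_refl k) a
  obtain ⟨i, hi⟩ := Function.ne_iff.mp ha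
  refine ⟨Pi.single i 1, SSaux2.mem_Vsub_top _, ?_⟩
  have : SSaux2.dp (Pi.single i (1:F)) a = a i := by
    simp [SSaux2.dp, Pi.single_apply, ite_mul]
  rw [this]
  simpa using hi

end SSaux5

namespace SSaux6
open SSaux

lemma griesmer_arith (q k s t : ℕ) (hq2 : 2 ≤ q) (hk : 2 ≤ k) (hs : 1 ≤ s) (hst : s ≤ t)
    (m : ℕ → ℕ) (hm1 : ∀ j < s, 1 ≤ m j) (hmk : ∀ j < s, m j ≤ k - 1)
    (hminj : ∀ j < s, ∀ j' < s, m j = m j' → j = j') :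
    (t * q ^ (k - 1) - ∑ j ∈ range s, q ^ (m j - 1))
      + ∑ i ∈ Icc 1 (k - 1), cdiv (t * q ^ (k - 1) - ∑ j ∈ range s, q ^ (m j - 1)) (q ^ i)
      = t * G q k - ∑ j ∈ range s, G q (m j) := by
  have ht1 : 1 ≤ t := le_trans hs hst
  set S := ∑ j ∈ range s, q ^ (m j - 1) with hSdef
  set D := t * q ^ (k - 1) - S with hDdef
  -- S is small
  have hSlt : S < t * q ^ (k - 1) := by
    have h1 : S ≤ s * q ^ (k - 2) := by
      have := Finset.sum_le_card_nsmul (range s) (fun j => q ^ (m j - 1)) (q ^ (k - 2))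
        (fun j hj => by
          apply Nat.pow_le_pow_right (by omega)
          have h1 := hm1 j (mem_range.mp hj)
          have h2 := hmk j (mem_range.mp hj)
          omega)
      simpa using this
    have h2 : s * q ^ (k - 2) ≤ t * q ^ (k - 2) := Nat.mul_le_mul_right _ hst
    have h3 : t * q ^ (k - 2) < t * q ^ (k - 1) := by
      have := Nat.pow_lt_pow_right (show 1 < q by omega) (show k - 2 < k - 1 by omega)
      exact Nat.mul_lt_mul_of_le_of_lt (le_refl t) this (by omega)
    omega
  -- the high part bound
  have hHilt : ∀ i, i ≤ k - 1 →
      (∑ j ∈ (range s).filter (fun j => i < m j), q ^ (m j - 1 - i)) < t * q ^ (k - 1 - i) := by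
    intro i hi
    have hinj : ∀ j ∈ (range s).filter (fun j => i < m j),
        ∀ j' ∈ (range s).filter (fun j => i < m j),
        m j - 1 - i = m j' - 1 - i → j = j' := by
      intro j hj j' hj'
      simp only [mem_filter, mem_range] at hj hj'
      intro h
      exact hminj j hj.1 j' hj'.1 (by omega)
    calc (∑ j ∈ (range s).filter (fun j => i < m j), q ^ (m j - 1 - i))
        = ∑ e ∈ ((range s).filter (fun j => i < m j)).image (fun j => m j - 1 - i), q ^ e :=
          (Finset.sum_image hinj).symm
      _ < q ^ (k - 1 - i) := by
          apply sum_pow_lt hq2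
          intro e he
          obtain ⟨j, hj, rfl⟩ := Finset.mem_image.mp he
          simp only [mem_filter, mem_range] at hj
          have := hmk j hj.1
          omega
      _ ≤ t * q ^ (k - 1 - i) := Nat.le_mul_of_pos_left _ (by omega)
  -- per-i cdiv formula
  have hstep : ∀ i, i ≤ k - 1 → cdiv D (q ^ i)
      = t * q ^ (k - 1 - i) - ∑ j ∈ (range s).filter (fun j => i < m j), q ^ (m j - 1 - i) := by
    intro i hi
    set Hi := ∑ j ∈ (range s).filter (fun j => i < m j), q ^ (m j - 1 - i) with hHidef
    set Lo := ∑ j ∈ (range s).filter (fun j => ¬ i < m j), q ^ (m j - 1) with hLodef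
    have hsplit : S = q ^ i * Hi + Lo := by
      rw [hSdef, ← Finset.sum_filter_add_sum_filter_not (range s) (fun j => i < m j)]
      congr 1
      rw [hHidef, Finset.mul_sum]
      apply Finset.sum_congr rfl
      intro j hj
      simp only [mem_filter, mem_range] at hj
      rw [← pow_add]
      congr 1
      omega
    have hLo : Lo < q ^ i := by
      have hinj : ∀ j ∈ (range s).filter (fun j => ¬ i < m j),
          ∀ j' ∈ (range s).filter (fun j => ¬ i < m j),
          m j - 1 = m j' - 1 → j = j' := by
        intro j hj j' hj'
        simp only [mem_filter, mem_range] at hj hj'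
        intro h
        have h1 := hm1 j hj.1
        have h2 := hm1 j' hj'.1
        exact hminj j hj.1 j' hj'.1 (by omega)
      calc Lo = ∑ e ∈ ((range s).filter (fun j => ¬ i < m j)).image (fun j => m j - 1), q ^ e :=
            (Finset.sum_image hinj).symm
        _ < q ^ i := by
            apply sum_pow_lt hq2
            intro e he
            obtain ⟨j, hj, rfl⟩ := Finset.mem_image.mp he
            simp only [mem_filter, mem_range] at hj
            have := hm1 j hj.1
            omega
    have hHi : Hi < t * q ^ (k - 1 - i) := hHilt i hi
    have hpow : q ^ i * q ^ (k - 1 - i) = q ^ (k - 1) := by rw [← pow_add]; congr 1; omega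
    have hQT : q ^ i * (t * q ^ (k - 1 - i)) = t * q ^ (k - 1) := by
      rw [mul_left_comm, hpow]
    have hZ : q ^ i * (t * q ^ (k - 1 - i) - Hi) + q ^ i * Hi = q ^ i * (t * q ^ (k - 1 - i)) := by
      rw [← Nat.left_distrib]
      congr 1
      omega
    exact SSaux.cdiv_formula (q ^ i) _ Lo D (pow_pos (by omega) i) hLo (by omega) (by omega)
  -- assemble the sum
  set Mi : ℕ → ℕ := fun i =>
    t * q ^ (k - 1 - i) - ∑ j ∈ (range s).filter (fun j => i < m j), q ^ (m j - 1 - i) with hMidef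
  have hM0 : Mi 0 = D := by
    rw [hMidef]
    simp only [Nat.sub_zero]
    rw [hDdef, hSdef]
    congr 1
    rw [Finset.filter_true_of_mem (fun j hj => by
      have := hm1 j (mem_range.mp hj); omega)]
  have hIcc : Icc 1 (k - 1) = Ico 1 k := by
    rw [← Finset.Ico_add_one_right_eq_Icc]
    congr 1
    omega
  have hLHS : D + ∑ i ∈ Icc 1 (k - 1), cdiv D (q ^ i) = ∑ i ∈ range k, Mi i := by
    rw [Finset.range_eq_Ico, Finset.sum_eq_sum_Ico_succ_bot (by omega : 0 < k) Mi, hM0]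
    congr 1
    rw [hIcc]
    apply Finset.sum_congr rfl
    intro i hi
    rw [mem_Ico] at hi
    exact hstep i (by omega)
  rw [hLHS]
  -- evaluate the sum of Mi
  have hsub : ∑ i ∈ range k, Mi i
      = ∑ i ∈ range k, (t * q ^ (k - 1 - i))
        - ∑ i ∈ range k, ∑ j ∈ (range s).filter (fun j => i < m j), q ^ (m j - 1 - i) := by
    rw [hMidef]
    apply Finset.sum_tsub_distrib
    intro i hi
    exact le_of_lt (hHilt i (by rw [mem_range] at hi; omega))
  rw [hsub]
  congr 1
  · rw [← Finset.mul_sum]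
    congr 1
    exact Finset.sum_range_reflect (fun j => q ^ j) k
  · -- swap sums
    have h1 : ∀ i, ∑ j ∈ (range s).filter (fun j => i < m j), q ^ (m j - 1 - i)
        = ∑ j ∈ range s, if i < m j then q ^ (m j - 1 - i) else 0 := fun i =>
      Finset.sum_filter _ _
    rw [Finset.sum_congr rfl (fun i _ => h1 i), Finset.sum_comm]
    apply Finset.sum_congr rfl
    intro j hj
    rw [mem_range] at hj
    have hmj := hm1 j hj
    have hmjk := hmk j hj
    have h2 : ∑ i ∈ range (m j), (if i < m j then q ^ (m j - 1 - i) else 0)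
        = ∑ i ∈ range k, (if i < m j then q ^ (m j - 1 - i) else 0) := by
      apply Finset.sum_subset (Finset.range_subset_range.mpr (by omega))
      intro i _ hni
      rw [mem_range] at hni
      rw [if_neg (by omega)]
    rw [← h2]
    rw [Finset.sum_congr rfl (fun i hi => if_pos (mem_range.mp hi))]
    exact Finset.sum_range_reflect (fun i => q ^ i) (m j)

end SSaux6

namespace SSaux7
variable {F : Type} [Field F]

/-- evaluation (generator-matrix) linear map -/
def evMap {k : ℕ} {I : Type} (col : I → (Fin k → F)) : (Fin k → F) →ₗ[F] (I → F) where
  toFun a := fun x => SSaux2.dp (col x) a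
  map_add' a b := by
    funext x
    simp [SSaux2.dp, mul_add, Finset.sum_add_distrib]
  map_smul' c a := by
    funext x
    simp [SSaux2.dp, Finset.mul_sum, mul_left_comm]

lemma dp_single {k : ℕ} (i : Fin k) (a : Fin k → F) :
    SSaux2.dp (Pi.single i (1 : F)) a = a i := by
  simp [SSaux2.dp, Pi.single_apply, ite_mul]

end SSaux7

namespace SSaux8
open SSaux

theorem main_aux (F : Type) [Field F] [Fintype F] (k s t : ℕ)
    (hs : 1 ≤ s) (hst : s ≤ t) (hk2 : 2 ≤ k)
    (m : ℕ → ℕ)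
    (hm1 : ∀ j < s, 1 ≤ m j) (hmk : ∀ j < s, m j ≤ k - 1)
    (hminj : ∀ j < s, ∀ j' < s, m j = m j' → j = j')
    (n d : ℕ)
    (hn : n = t * SSaux.G (Fintype.card F) k - ∑ j ∈ range s, SSaux.G (Fintype.card F) (m j))
    (hd : d = t * Fintype.card F ^ (k - 1) - ∑ j ∈ range s, Fintype.card F ^ (m j - 1)) :
    ∃ C : Submodule F (Fin n → F),
      Module.finrank F ↥C = k ∧ minDist C = d ∧
      minDist C + ∑ i ∈ Icc 1 (k - 1), cdiv (minDist C) (Fintype.card F ^ i) = n := by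
  classical
  have hq2 : 2 ≤ Fintype.card F := Fintype.one_lt_card
  have ht1 : 1 ≤ t := le_trans hs hst
  haveI : Finite (ℙ F (Fin k → F)) := SSaux4.finP
  set keep : Fin t × ℙ F (Fin k → F) → Prop := fun x =>
    ¬((x.1 : ℕ) < s ∧ x.2.rep ∈ (SSaux2.Vsub k (m (x.1 : ℕ)) : Submodule F (Fin k → F)))
    with hkeep
  -- counting with a generic predicate on points
  have count_split : ∀ R : ℙ F (Fin k → F) → Prop,
      Nat.card {x : Fin t × ℙ F (Fin k → F) // keep x ∧ R x.2}
        = ∑ j ∈ range t, (Nat.card {P : ℙ F (Fin k → F) // R P}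
            - if j < s then Nat.card {P : ℙ F (Fin k → F) //
                P.rep ∈ (SSaux2.Vsub k (m j) : Submodule F (Fin k → F)) ∧ R P} else 0) := by
    intro R
    set g : ℕ → ℕ := fun j' => Nat.card {P : ℙ F (Fin k → F) //
      ¬(j' < s ∧ P.rep ∈ (SSaux2.Vsub k (m j') : Submodule F (Fin k → F))) ∧ R P} with hg
    have e1 : {x : Fin t × ℙ F (Fin k → F) // keep x ∧ R x.2}
        ≃ (j : Fin t) × {P : ℙ F (Fin k → F) // keep (j, P) ∧ R P} :=
      Equiv.subtypeProdEquivSigmaSubtype (fun j P => keep (j, P) ∧ R P)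
    calc Nat.card {x : Fin t × ℙ F (Fin k → F) // keep x ∧ R x.2}
        = ∑ j : Fin t, Nat.card {P : ℙ F (Fin k → F) // keep (j, P) ∧ R P} := by
          rw [Nat.card_congr e1, SSaux2.Natcard_sigma]
      _ = ∑ j : Fin t, g (j : ℕ) := Finset.sum_congr rfl (fun j _ => rfl)
      _ = ∑ j ∈ range t, g j := Fin.sum_univ_eq_sum_range g t
      _ = _ := by
          apply Finset.sum_congr rfl
          intro j hj
          by_cases hjs : j < s
          · rw [if_pos hjs]
            have e3 : {P : ℙ F (Fin k → F) //
                ¬(j < s ∧ P.rep ∈ (SSaux2.Vsub k (m j) : Submodule F (Fin k → F))) ∧ R P}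
                ≃ {P : ℙ F (Fin k → F) // R P ∧
                    ¬(P.rep ∈ (SSaux2.Vsub k (m j) : Submodule F (Fin k → F)))} :=
              Equiv.subtypeEquivRight (fun P => by tauto)
            have e4 : {P : ℙ F (Fin k → F) //
                P.rep ∈ (SSaux2.Vsub k (m j) : Submodule F (Fin k → F)) ∧ R P}
                ≃ {P : ℙ F (Fin k → F) // R P ∧
                    P.rep ∈ (SSaux2.Vsub k (m j) : Submodule F (Fin k → F))} :=
              Equiv.subtypeEquivRight (fun P => by tauto)
            have hsplit := SSaux2.card_and_not (fun P : ℙ F (Fin k → F) => R P)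
              (fun P : ℙ F (Fin k → F) =>
                P.rep ∈ (SSaux2.Vsub k (m j) : Submodule F (Fin k → F)))
            show Nat.card {P : ℙ F (Fin k → F) //
              ¬(j < s ∧ P.rep ∈ (SSaux2.Vsub k (m j) : Submodule F (Fin k → F))) ∧ R P} = _
            rw [Nat.card_congr e3, Nat.card_congr e4]
            omega
          · rw [if_neg hjs]
            have e3 : {P : ℙ F (Fin k → F) //
                ¬(j < s ∧ P.rep ∈ (SSaux2.Vsub k (m j) : Submodule F (Fin k → F))) ∧ R P}
                ≃ {P : ℙ F (Fin k → F) // R P} :=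
              Equiv.subtypeEquivRight (fun P =>
                ⟨fun h => h.2, fun h => ⟨fun hc => absurd hc.1 hjs, h⟩⟩)
            show Nat.card {P : ℙ F (Fin k → F) //
              ¬(j < s ∧ P.rep ∈ (SSaux2.Vsub k (m j) : Submodule F (Fin k → F))) ∧ R P} = _
            rw [Nat.card_congr e3]
            omega
  -- cardinality of the index set
  have hcardI : Nat.card {x : Fin t × ℙ F (Fin k → F) // keep x} = n := by
    have e : {x : Fin t × ℙ F (Fin k → F) // keep x}
        ≃ {x : Fin t × ℙ F (Fin k → F) // keep x ∧ (fun _ : ℙ F (Fin k → F) => True) x.2} :=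
      Equiv.subtypeEquivRight (fun x => by simp)
    rw [Nat.card_congr e, count_split (fun _ : ℙ F (Fin k → F) => True)]
    have hPtrue : Nat.card {P : ℙ F (Fin k → F) // True} = SSaux.G (Fintype.card F) k := by
      rw [Nat.card_congr (Equiv.subtypeUnivEquiv (fun P => trivial)), SSaux5.cardP_top]
    have hterm : ∀ j ∈ range t,
        (Nat.card {P : ℙ F (Fin k → F) // True}
          - if j < s then Nat.card {P : ℙ F (Fin k → F) //
              P.rep ∈ (SSaux2.Vsub k (m j) : Submodule F (Fin k → F)) ∧ True} else 0)
        = SSaux.G (Fintype.card F) k - (if j < s then SSaux.G (Fintype.card F) (m j) else 0) := by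
      intro j _
      rw [hPtrue]
      congr 1
      by_cases hjs : j < s
      · rw [if_pos hjs, if_pos hjs]
        rw [Nat.card_congr (Equiv.subtypeEquivRight
          (fun P : ℙ F (Fin k → F) => and_iff_left trivial))]
        exact SSaux5.cardP_V (le_trans (hmk j hjs) (by omega))
      · rw [if_neg hjs, if_neg hjs]
    rw [Finset.sum_congr rfl hterm]
    rw [Finset.sum_tsub_distrib _ (fun j _ => by
      by_cases hjs : j < s
      · rw [if_pos hjs]
        exact SSaux.G_mono (le_trans (hmk j hjs) (by omega))
      · rw [if_neg hjs]
        exact Nat.zero_le _)]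
    rw [Finset.sum_const, Finset.card_range, smul_eq_mul, hn]
    congr 1
    rw [← Finset.sum_subset (Finset.range_subset_range.mpr hst)
      (fun x _ hnx => if_neg (by simpa using hnx))]
    exact Finset.sum_congr rfl (fun j hj => if_pos (mem_range.mp hj))
  -- reindexing
  haveI : Fintype {x : Fin t × ℙ F (Fin k → F) // keep x} := Fintype.ofFinite _
  have hcard' : Fintype.card {x : Fin t × ℙ F (Fin k → F) // keep x} = n := by
    rw [← Nat.card_eq_fintype_card, hcardI]
  set e : {x : Fin t × ℙ F (Fin k → F) // keep x} ≃ Fin n :=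
    Fintype.equivFinOfCardEq hcard' with he
  set φ : (Fin k → F) →ₗ[F] ({x : Fin t × ℙ F (Fin k → F) // keep x} → F) :=
    SSaux7.evMap (fun x => x.1.2.rep) with hφ
  set φ' : (Fin k → F) →ₗ[F] (Fin n → F) := (LinearMap.funLeft F F e.symm).comp φ with hφ'
  -- Hamming weight of codewords
  have hwt_eq : ∀ a : Fin k → F,
      hwt (φ' a) = Nat.card {x : Fin t × ℙ F (Fin k → F) //
        keep x ∧ SSaux2.dp x.2.rep a ≠ 0} := by
    intro a
    have e1 : {i : Fin n // φ' a i ≠ 0}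
        ≃ {x : {x : Fin t × ℙ F (Fin k → F) // keep x} // SSaux2.dp x.1.2.rep a ≠ 0} :=
      Equiv.subtypeEquiv e.symm (fun i => Iff.rfl)
    show Nat.card {i : Fin n // φ' a i ≠ 0} = _
    rw [Nat.card_congr e1, Nat.card_congr
      (Equiv.subtypeSubtypeEquivSubtypeInter keep
        (fun y : Fin t × ℙ F (Fin k → F) => SSaux2.dp y.2.rep a ≠ 0))]
  -- weight formula for nonzero messages
  have hweight : ∀ a : Fin k → F, a ≠ 0 →
      hwt (φ' a) = t * Fintype.card F ^ (k - 1)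
        - ∑ j ∈ range s, Nat.card {P : ℙ F (Fin k → F) //
            P.rep ∈ (SSaux2.Vsub k (m j) : Submodule F (Fin k → F))
              ∧ SSaux2.dp P.rep a ≠ 0} := by
    intro a ha
    rw [hwt_eq a, count_split (fun P => SSaux2.dp P.rep a ≠ 0)]
    have hA : Nat.card {P : ℙ F (Fin k → F) // SSaux2.dp P.rep a ≠ 0}
        = Fintype.card F ^ (k - 1) := SSaux5.cardP_dp_top (by omega) a ha
    have hBle : ∀ j < s, Nat.card {P : ℙ F (Fin k → F) //
        P.rep ∈ (SSaux2.Vsub k (m j) : Submodule F (Fin k → F)) ∧ SSaux2.dp P.rep a ≠ 0}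
        ≤ Fintype.card F ^ (k - 1) := by
      intro j hj
      by_cases hex : ∃ v ∈ (SSaux2.Vsub k (m j) : Submodule F (Fin k → F)), SSaux2.dp v a ≠ 0
      · rw [SSaux5.cardP_V_dp (hm1 j hj) (le_trans (hmk j hj) (by omega)) a hex]
        exact Nat.pow_le_pow_right (by omega) (by have := hmk j hj; omega)
      · rw [SSaux5.cardP_V_dp_zero a hex]
        exact Nat.zero_le _
    rw [Finset.sum_congr rfl (fun j (_ : j ∈ range t) => by rw [hA])]
    rw [Finset.sum_tsub_distrib _ (fun j _ => by
      by_cases hjs : j < s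
      · rw [if_pos hjs]
        exact hBle j hjs
      · rw [if_neg hjs]
        exact Nat.zero_le _)]
    rw [Finset.sum_const, Finset.card_range, smul_eq_mul]
    congr 1
    rw [← Finset.sum_subset (Finset.range_subset_range.mpr hst)
      (fun x _ hnx => if_neg (by simpa using hnx))]
    exact Finset.sum_congr rfl (fun j hj => if_pos (mem_range.mp hj))
  -- generic bound on the subtracted terms
  have hBgen : ∀ (a : Fin k → F), ∀ j < s, Nat.card {P : ℙ F (Fin k → F) //
      P.rep ∈ (SSaux2.Vsub k (m j) : Submodule F (Fin k → F)) ∧ SSaux2.dp P.rep a ≠ 0}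
      ≤ Fintype.card F ^ (m j - 1) := by
    intro a j hj
    by_cases hex : ∃ v ∈ (SSaux2.Vsub k (m j) : Submodule F (Fin k → F)), SSaux2.dp v a ≠ 0
    · rw [SSaux5.cardP_V_dp (hm1 j hj) (le_trans (hmk j hj) (by omega)) a hex]
    · rw [SSaux5.cardP_V_dp_zero a hex]
      exact Nat.zero_le _
  have hd_le : ∀ a : Fin k → F, a ≠ 0 → d ≤ hwt (φ' a) := by
    intro a ha
    rw [hweight a ha, hd]
    apply Nat.sub_le_sub_left
    exact Finset.sum_le_sum (fun j hj => hBgen a j (mem_range.mp hj))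
  -- d is positive
  have hdpos : 0 < d := by
    rw [hd]
    have h1 : ∑ j ∈ range s, Fintype.card F ^ (m j - 1) ≤ s * Fintype.card F ^ (k - 2) := by
      have := Finset.sum_le_card_nsmul (range s) (fun j => Fintype.card F ^ (m j - 1))
        (Fintype.card F ^ (k - 2)) (fun j hj => by
          apply Nat.pow_le_pow_right (by omega)
          have h1 := hm1 j (mem_range.mp hj)
          have h2 := hmk j (mem_range.mp hj)
          omega)
      simpa using this
    have h2 : s * Fintype.card F ^ (k - 2) ≤ t * Fintype.card F ^ (k - 2) :=
      Nat.mul_le_mul_right _ hst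
    have h3 : t * Fintype.card F ^ (k - 2) < t * Fintype.card F ^ (k - 1) := by
      have := Nat.pow_lt_pow_right (show 1 < Fintype.card F by omega)
        (show k - 2 < k - 1 by omega)
      exact Nat.mul_lt_mul_of_le_of_lt (le_refl t) this (by omega)
    omega
  -- the codeword of weight exactly d
  set e0 : Fin k → F := Pi.single (⟨0, by omega⟩ : Fin k) 1 with he0def
  have he0 : e0 ≠ 0 := by
    intro h
    have := congrFun h ⟨0, by omega⟩
    rw [he0def] at this
    simp at this
  have hwt_e0 : hwt (φ' e0) = d := by
    rw [hweight e0 he0, hd]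
    congr 1
    apply Finset.sum_congr rfl
    intro j hj
    rw [mem_range] at hj
    apply SSaux5.cardP_V_dp (hm1 j hj) (le_trans (hmk j hj) (by omega))
    refine ⟨e0, ?_, ?_⟩
    · intro i hi
      rw [he0def]
      apply Pi.single_eq_of_ne
      intro hcon
      have h0 : (i : ℕ) = 0 := by rw [hcon]
      have := hm1 j hj
      omega
    · rw [he0def, SSaux7.dp_single]
      simp
  -- injectivity
  have hwt0 : hwt (0 : Fin n → F) = 0 := by
    haveI : IsEmpty {i : Fin n // (0 : Fin n → F) i ≠ 0} := ⟨fun x => x.2 rfl⟩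
    exact Nat.card_of_isEmpty
  have hφ'inj : Function.Injective φ' := by
    apply LinearMap.ker_eq_bot.mp
    apply LinearMap.ker_eq_bot'.mpr
    intro a hza
    by_contra ha
    have h1 := hd_le a ha
    rw [hza, hwt0] at h1
    omega
  -- min distance
  have hmin : minDist (LinearMap.range φ') = d := by
    have hmem : d ∈ {w | ∃ c ∈ LinearMap.range φ', c ≠ 0 ∧ hwt c = w} := by
      refine ⟨φ' e0, ⟨e0, rfl⟩, ?_, hwt_e0⟩
      intro h
      rw [h, hwt0] at hwt_e0
      omega
    have hlb : ∀ w ∈ {w | ∃ c ∈ LinearMap.range φ', c ≠ 0 ∧ hwt c = w}, d ≤ w := by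
      rintro w ⟨c, ⟨a, rfl⟩, hc0, rfl⟩
      apply hd_le
      intro h0
      exact hc0 (by rw [h0, map_zero])
    exact le_antisymm (Nat.sInf_le hmem) (le_csInf ⟨d, hmem⟩ hlb)
  refine ⟨LinearMap.range φ', ?_, hmin, ?_⟩
  · rw [LinearMap.finrank_range_of_inj hφ'inj]
    exact Module.finrank_fin_fun F
  · rw [hmin, hn, hd]
    exact SSaux6.griesmer_arith (Fintype.card F) k s t hq2 hk2 hs hst m hm1 hmk hminj

end SSaux8

/-- Theorem `xxd2` (b): existence of a code meeting the Griesmer bound. -/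
theorem stmt_2 (q : ℕ) (F : Type) [Field F] [Fintype F] (hq : Fintype.card F = q)
    (k s t : ℕ) (hs : 1 ≤ s) (hst : s ≤ t) (u : ℕ → ℕ)
    (hu0 : u 0 = 0) (huk : u (s + 1) = k)
    (humono : ∀ i ∈ Finset.Icc 1 (s + 1), u (i - 1) < u i) :
    ∃ C : Submodule F
        (Fin (t * ((q ^ k - 1) / (q - 1)) - ∑ i ∈ Finset.Icc 1 s, (q ^ u i - 1) / (q - 1)) → F),
      Module.finrank F ↥C = k ∧
      minDist C = t * q ^ (k - 1) - ∑ i ∈ Finset.Icc 1 s, q ^ (u i - 1) ∧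
      minDist C + ∑ i ∈ Finset.Icc 1 (k - 1), cdiv (minDist C) (q ^ i) =
        t * ((q ^ k - 1) / (q - 1)) - ∑ i ∈ Finset.Icc 1 s, (q ^ u i - 1) / (q - 1) := by
  subst hq
  have hq2 : 2 ≤ Fintype.card F := Fintype.one_lt_card
  have key : ∀ b, b ≤ s + 1 → ∀ a, a < b → u a < u b := by
    intro b
    induction b with
    | zero => omega
    | succ c ih =>
      intro hb a ha
      have hc : u c < u (c + 1) := by
        have := humono (c + 1) (Finset.mem_Icc.mpr ⟨by omega, hb⟩)
        simpa using this
      rcases Nat.lt_succ_iff_lt_or_eq.mp ha with h | h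
      · exact lt_trans (ih (by omega) a h) hc
      · subst h; exact hc
  have hk2 : 2 ≤ k := by
    have h1 : u 0 < u 1 := key 1 (by omega) 0 (by omega)
    have h2 : u 1 < u (s + 1) := key (s + 1) (le_refl _) 1 (by omega)
    omega
  have hm1 : ∀ j < s, 1 ≤ u (1 + j) := by
    intro j hj
    have := key (1 + j) (by omega) 0 (by omega)
    omega
  have hmk : ∀ j < s, u (1 + j) ≤ k - 1 := by
    intro j hj
    have := key (s + 1) (le_refl _) (1 + j) (by omega)
    omega
  have hminj : ∀ j < s, ∀ j' < s, u (1 + j) = u (1 + j') → j = j' := by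
    intro j hj j' hj' h
    by_contra hne
    rcases Nat.lt_or_ge j j' with hlt | hge
    · have := key (1 + j') (by omega) (1 + j) (by omega); omega
    · have hlt : j' < j := by omega
      have := key (1 + j) (by omega) (1 + j') (by omega); omega
  have hIcc : ∀ f : ℕ → ℕ, ∑ i ∈ Finset.Icc 1 s, f i = ∑ j ∈ Finset.range s, f (1 + j) := by
    intro f
    rw [← Finset.Ico_add_one_right_eq_Icc, Finset.sum_Ico_eq_sum_range]
    simp
  have hn : t * ((Fintype.card F ^ k - 1) / (Fintype.card F - 1))
      - ∑ i ∈ Finset.Icc 1 s, (Fintype.card F ^ u i - 1) / (Fintype.card F - 1)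
      = t * SSaux.G (Fintype.card F) k
        - ∑ j ∈ Finset.range s, SSaux.G (Fintype.card F) (u (1 + j)) := by
    rw [SSaux.G_div hq2 k, hIcc (fun i => (Fintype.card F ^ u i - 1) / (Fintype.card F - 1))]
    congr 1
    exact Finset.sum_congr rfl (fun j _ => SSaux.G_div hq2 (u (1 + j)))
  have hd : t * Fintype.card F ^ (k - 1) - ∑ i ∈ Finset.Icc 1 s, Fintype.card F ^ (u i - 1)
      = t * Fintype.card F ^ (k - 1)
        - ∑ j ∈ Finset.range s, Fintype.card F ^ (u (1 + j) - 1) := by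
    rw [hIcc (fun i => Fintype.card F ^ (u i - 1))]
  rw [hn, hd]
  exact SSaux8.main_aux F k s t hs hst hk2 (fun j => u (1 + j)) hm1 hmk hminj _ _ rfl rfl
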